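/- Let d be a positive natural number, let (E_k)_{k ∈ K} be a finite family of effects in Matrix (Fin d) (Fin d) ℂ (each E_k and 1 − E_k positive semidefinite) with ∑_k E_k = 1, and let B ∈ Matrix (Fin d) (Fin d) ℂ be an effect. Then ∑_k E_k^{1/2} B E_k^{1/2} = B if and only if E_k B = B E_k for all k ∈ K. -/

import Mathlib

open scoped ComplexOrder Matrix

/-- The square root of a positive semidefinite matrix, as defined in Mathlib (Dec 2024). -/
noncomputable def Matrix.PosSemidef.sqrt {n : Type*} {𝕜 : Type*} [Fintype n] [RCLike 𝕜]
    [DecidableEq n] {A : Matrix n n 𝕜} (hA : A.PosSemidef) : Matrix n n 𝕜 :=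
  hA.1.eigenvectorUnitary.1 * Matrix.diagonal ((↑) ∘ Real.sqrt ∘ hA.1.eigenvalues) *
  (star hA.1.eigenvectorUnitary : Matrix n n 𝕜)

lemma aux_sqrt_mul_self {n : Type*} [Fintype n] [DecidableEq n]
    {A : Matrix n n ℂ} (hA : A.PosSemidef) : hA.sqrt * hA.sqrt = A := by
  have hU1 : (star hA.1.eigenvectorUnitary : Matrix n n ℂ) *
      (hA.1.eigenvectorUnitary : Matrix n n ℂ) = 1 :=
    Matrix.mem_unitaryGroup_iff'.mp hA.1.eigenvectorUnitary.2
  conv_rhs => rw [hA.1.spectral_theorem]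
  unfold Matrix.PosSemidef.sqrt
  calc _ = (hA.1.eigenvectorUnitary : Matrix n n ℂ) *
        (Matrix.diagonal ((↑) ∘ Real.sqrt ∘ hA.1.eigenvalues) *
          ((star hA.1.eigenvectorUnitary : Matrix n n ℂ) * (hA.1.eigenvectorUnitary : Matrix n n ℂ)) *
          Matrix.diagonal ((↑) ∘ Real.sqrt ∘ hA.1.eigenvalues)) *
        (star hA.1.eigenvectorUnitary : Matrix n n ℂ) := by simp only [Matrix.mul_assoc]; rfl
    _ = _ := by
      rw [hU1, Matrix.mul_one, Matrix.diagonal_mul_diagonal]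
      congr 3
      funext i
      simp only [Function.comp_apply]
      have h := Real.mul_self_sqrt (hA.eigenvalues_nonneg i)
      norm_cast
      exact congrArg _ h

lemma aux_sqrt_conjTranspose {n : Type*} [Fintype n] [DecidableEq n]
    {A : Matrix n n ℂ} (hA : A.PosSemidef) : (hA.sqrt)ᴴ = hA.sqrt := by
  unfold Matrix.PosSemidef.sqrt
  simp [Matrix.conjTranspose_mul, Matrix.diagonal_conjTranspose, Matrix.mul_assoc,
    Matrix.star_eq_conjTranspose]
  congr 3
  funext i
  simp

lemma aux_commute_diagonal {n : Type*} [Fintype n] [DecidableEq n]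
    (M : Matrix n n ℂ) (dv ev : n → ℂ)
    (h : ∀ i j, dv i = dv j → ev i = ev j)
    (hc : M * Matrix.diagonal dv = Matrix.diagonal dv * M) :
    M * Matrix.diagonal ev = Matrix.diagonal ev * M := by
  ext i j
  have hij := congrFun (congrFun hc i) j
  rw [Matrix.mul_diagonal, Matrix.diagonal_mul] at hij ⊢
  by_cases hd : dv i = dv j
  · rw [h i j hd, mul_comm]
  · have hM : M i j = 0 := by
      by_contra hM0
      exact hd (mul_left_cancel₀ hM0 (hij.trans (mul_comm _ _)) :
        (dv j : ℂ) = dv i).symm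
    simp [hM]

lemma aux_conj_conj {n : Type*} [Fintype n] [DecidableEq n]
    (U X Y : Matrix n n ℂ) (hU2 : U * star U = 1) :
    (star U * X * U) * (star U * Y * U) = star U * (X * Y) * U := by
  calc (star U * X * U) * (star U * Y * U)
      = star U * X * (U * star U) * Y * U := by simp only [Matrix.mul_assoc]
    _ = star U * (X * Y) * U := by rw [hU2, Matrix.mul_one]; simp only [Matrix.mul_assoc]

/-- A matrix commuting with a positive semidefinite matrix commutes with its square root. -/
lemma aux_commute_sqrt {n : Type*} [Fintype n] [DecidableEq n]
    {A : Matrix n n ℂ} (hA : A.PosSemidef) (B : Matrix n n ℂ)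
    (h : A * B = B * A) : hA.sqrt * B = B * hA.sqrt := by
  set U : Matrix n n ℂ := (hA.1.eigenvectorUnitary : Matrix n n ℂ) with hUdef
  have hU1 : star U * U = 1 := Matrix.mem_unitaryGroup_iff'.mp hA.1.eigenvectorUnitary.2
  have hU2 : U * star U = 1 := Matrix.mem_unitaryGroup_iff.mp hA.1.eigenvectorUnitary.2
  set dv : n → ℂ := RCLike.ofReal ∘ hA.1.eigenvalues with hdv
  set ev : n → ℂ := RCLike.ofReal ∘ Real.sqrt ∘ hA.1.eigenvalues with hev
  have hspec : A = U * Matrix.diagonal dv * star U := hA.1.spectral_theorem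
  have hsqrt : hA.sqrt = U * Matrix.diagonal ev * star U := rfl
  set M : Matrix n n ℂ := star U * B * U with hM
  have hDs : Matrix.diagonal dv = star U * A * U := by
    rw [hspec]
    refine Eq.symm ?_
    calc star U * (U * Matrix.diagonal dv * star U) * U
        = (star U * U) * Matrix.diagonal dv * (star U * U) := by
          simp only [Matrix.mul_assoc]
      _ = Matrix.diagonal dv := by rw [hU1, Matrix.one_mul, Matrix.mul_one]
  have hcd : M * Matrix.diagonal dv = Matrix.diagonal dv * M := by
    rw [hM, hDs, aux_conj_conj _ _ _ hU2, aux_conj_conj _ _ _ hU2, ← h]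
  have hce : M * Matrix.diagonal ev = Matrix.diagonal ev * M := by
    refine aux_commute_diagonal M dv ev (fun i j hij => ?_) hcd
    simp only [hdv, Function.comp_apply, RCLike.ofReal_inj] at hij
    simp [hev, hij]
  have hBM : B = U * M * star U := by
    rw [hM]
    refine Eq.symm ?_
    calc U * (star U * B * U) * star U
        = (U * star U) * B * (U * star U) := by simp only [Matrix.mul_assoc]
      _ = B := by rw [hU2, Matrix.one_mul, Matrix.mul_one]
  have key : (U * Matrix.diagonal ev * star U) * B = B * (U * Matrix.diagonal ev * star U) := by
    conv_lhs => rw [hBM]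
    conv_rhs => rw [hBM]
    calc (U * Matrix.diagonal ev * star U) * (U * M * star U)
        = U * (Matrix.diagonal ev * (star U * U) * M) * star U := by
          simp only [Matrix.mul_assoc]
      _ = U * (Matrix.diagonal ev * M) * star U := by rw [hU1, Matrix.mul_one]
      _ = U * (M * Matrix.diagonal ev) * star U := by rw [hce]
      _ = U * M * (star U * U) * Matrix.diagonal ev * star U := by
          rw [hU1, Matrix.mul_one]; simp only [Matrix.mul_assoc]
      _ = (U * M * star U) * (U * Matrix.diagonal ev * star U) := by
          simp only [Matrix.mul_assoc]
  rw [hsqrt]; exact key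

lemma aux_trace_formula {n : Type*} [Fintype n] [DecidableEq n]
    (X : Matrix n n ℂ) :
    (Xᴴ * X).trace = ((∑ j, ∑ i, Complex.normSq (X i j) : ℝ) : ℂ) := by
  simp only [Matrix.trace, Matrix.diag, Matrix.mul_apply, Matrix.conjTranspose_apply]
  push_cast
  congr 1
  ext j
  congr 1
  ext i
  rw [mul_comm]
  exact Complex.mul_conj (X i j)

lemma aux_trace_conjTranspose_mul_self {n : Type*} [Fintype n] [DecidableEq n]
    (X : Matrix n n ℂ) (h : (Xᴴ * X).trace = 0) : X = 0 := by
  rw [aux_trace_formula] at h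
  have h0 : (∑ j, ∑ i, Complex.normSq (X i j) : ℝ) = 0 := by exact_mod_cast h
  ext i j
  have hnn : ∀ j ∈ Finset.univ, (0:ℝ) ≤ ∑ i, Complex.normSq (X i j) :=
    fun j _ => Finset.sum_nonneg fun i _ => Complex.normSq_nonneg _
  have h1 := (Finset.sum_eq_zero_iff_of_nonneg hnn).mp h0 j (Finset.mem_univ j)
  have h2 := (Finset.sum_eq_zero_iff_of_nonneg
    (fun i _ => Complex.normSq_nonneg (X i j))).mp h1 i (Finset.mem_univ i)
  simpa using Complex.normSq_eq_zero.mp h2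

/-- Generalized Lüders theorem for a discrete unsharp observable `(E_k)` in finite
dimension: the nonselective generalized Lüders operation leaves the effect `B`
undisturbed iff `B` commutes with every `E_k`. -/
theorem generalized_lueders_discrete
    (d : ℕ) (hd : 0 < d) (K : Type) [Fintype K]
    (E : K → Matrix (Fin d) (Fin d) ℂ)
    (hE : ∀ k, (E k).PosSemidef) (hE' : ∀ k, (1 - E k).PosSemidef)
    (hsum : ∑ k, E k = 1)
    (B : Matrix (Fin d) (Fin d) ℂ) (hB : B.PosSemidef) (hB' : (1 - B).PosSemidef) :
    (∑ k, (hE k).sqrt * B * (hE k).sqrt = B) ↔ (∀ k, E k * B = B * E k) := by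
  set C : K → Matrix (Fin d) (Fin d) ℂ := fun k => (hE k).sqrt with hC
  have hCsq : ∀ k, C k * C k = E k := fun k => aux_sqrt_mul_self (hE k)
  have hCH : ∀ k, (C k)ᴴ = C k := fun k => aux_sqrt_conjTranspose (hE k)
  have hBH : Bᴴ = B := hB.1
  constructor
  · intro hfix
    intro k
    -- show each commutator vanishes via a trace argument
    set X : K → Matrix (Fin d) (Fin d) ℂ := fun k => C k * B - B * C k with hX
    have hXH : ∀ k, (X k)ᴴ = B * C k - C k * B := by
      intro k
      simp [hX, Matrix.conjTranspose_sub, Matrix.conjTranspose_mul, hCH, hBH]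
    have htr : ∑ k, ((X k)ᴴ * X k).trace = 0 := by
      have expand : ∀ k, ((X k)ᴴ * X k).trace =
          (C k * C k * (B * B)).trace + (C k * C k * (B * B)).trace
            - (C k * B * C k * B).trace - (C k * B * C k * B).trace := by
        intro k
        rw [hXH k, hX]
        have e1 : (B * C k - C k * B) * (C k * B - B * C k) =
            B * (C k * C k) * B - B * C k * B * C k
              - C k * B * C k * B + C k * (B * B) * C k := by noncomm_ring
        rw [e1]
        rw [Matrix.trace_add, Matrix.trace_sub, Matrix.trace_sub]
        have t1 : (B * (C k * C k) * B).trace = (C k * C k * (B * B)).trace := by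
          rw [Matrix.mul_assoc, Matrix.trace_mul_comm, Matrix.mul_assoc]
        have t2 : (B * C k * B * C k).trace = (C k * B * C k * B).trace := by
          rw [Matrix.trace_mul_comm]
          simp only [Matrix.mul_assoc]
        have t4 : (C k * (B * B) * C k).trace = (C k * C k * (B * B)).trace := by
          rw [Matrix.trace_mul_comm]
          simp only [Matrix.mul_assoc]
        rw [t1, t2, t4]
        ring
      rw [Finset.sum_congr rfl (fun k _ => expand k)]
      have s1 : ∑ k, (C k * C k * (B * B)).trace = (B * B).trace := by
        rw [← Matrix.trace_sum, ← Finset.sum_mul]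
        have : ∑ k, C k * C k = 1 := by
          rw [Finset.sum_congr rfl (fun k _ => hCsq k), hsum]
        rw [this, Matrix.one_mul]
      have s2 : ∑ k, (C k * B * C k * B).trace = (B * B).trace := by
        rw [← Matrix.trace_sum, ← Finset.sum_mul, hfix]
      simp only [Finset.sum_add_distrib, Finset.sum_sub_distrib]
      rw [s1, s2]
      ring
    have hnn : ∀ k ∈ Finset.univ, (0:ℂ) ≤ ((X k)ᴴ * X k).trace := by
      intro k _
      rw [aux_trace_formula]
      have : (0:ℝ) ≤ ∑ j, ∑ i, Complex.normSq (X k i j) :=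
        Finset.sum_nonneg fun j _ => Finset.sum_nonneg fun i _ => Complex.normSq_nonneg _
      exact_mod_cast this
    have hz := (Finset.sum_eq_zero_iff_of_nonneg hnn).mp htr k (Finset.mem_univ k)
    have hXk : X k = 0 := aux_trace_conjTranspose_mul_self (X k) hz
    have hcomm : C k * B = B * C k := by
      have := sub_eq_zero.mp hXk
      exact this
    calc E k * B = C k * (C k * B) := by rw [← hCsq k, Matrix.mul_assoc]
      _ = C k * (B * C k) := by rw [hcomm]
      _ = (C k * B) * C k := by rw [Matrix.mul_assoc]
      _ = B * (C k * C k) := by rw [hcomm, Matrix.mul_assoc]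
      _ = B * E k := by rw [hCsq k]
  · intro hcomm
    have hCB : ∀ k, C k * B = B * C k := fun k =>
      aux_commute_sqrt (hE k) B (hcomm k)
    calc ∑ k, C k * B * C k = ∑ k, B * E k := by
          refine Finset.sum_congr rfl fun k _ => ?_
          rw [hCB k, Matrix.mul_assoc, hCsq k]
      _ = B * ∑ k, E k := by rw [Finset.mul_sum]
      _ = B := by rw [hsum, Matrix.mul_one]
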